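/- For every fixed real λ > 1, there exists a unique l₀ > 0 such that E(λ, l₀) = 0; moreover E(λ, l) ≠ 0 for every real l > 0 with l ≠ l₀. -/

import Mathlib

set_option maxHeartbeats 1600000 in
lemma key (s l A B : ℝ) (hs : 1 < s) (hl : 0 < l) (hA : 0 < A) (hB : 0 < B)
    (hA2 : A ^ 2 = s ^ 2 + l ^ 2) (hB2 : B ^ 2 = 1 + l ^ 2) :
    ((s - l) / (s + 1) + (l - A) / (A + B) = 0 ↔
      4*(s-1)*l^2 - (3*s-1)*(s-3)*l - 4*s*(s-1) = 0) := by
  have hs0 : (0:ℝ) < s := lt_trans one_pos hs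
  have hAl : l < A := by nlinarith
  have hAs : s < A := by nlinarith
  have hB1 : 1 < B := by nlinarith
  have hBl : l < B := by nlinarith
  have hAsB : A < s * B := by
    have h2 : A^2 < (s*B)^2 := by
      have hsB2 : (s*B)^2 = s^2*(1+l^2) := by rw [mul_pow, hB2]
      rw [hsB2, hA2]
      nlinarith [mul_pos (show (0:ℝ) < s^2 - 1 by nlinarith) (mul_pos hl hl)]
    exact lt_of_pow_lt_pow_left₀ 2 (by positivity) h2
  have hd1 : (0:ℝ) < s + 1 := by linarith
  have hd2 : (0:ℝ) < A + B := by linarith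
  have ht0 : 0 < s + (s-1)*l := by nlinarith
  have h1 : (s - l) / (s + 1) + (l - A) / (A + B)
      = ((s-l)*(A+B) + (l-A)*(s+1)) / ((s+1)*(A+B)) := by
    field_simp
  have I1 : (s^2*B - (s+(s-1)*l)*A - l*(s-1)*(l-s))*(A+B)
      = ((s-l)*(A+B) + (l-A)*(s+1))*(s-1)*(A+l) := by
    linear_combination (-1 : ℝ) * hA2 + s^2 * hB2
  have step2 : ((s-l)*(A+B) + (l-A)*(s+1) = 0)
      ↔ (s^2*B - (s+(s-1)*l)*A - l*(s-1)*(l-s) = 0) := by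
    constructor
    · intro h
      have h2 : (s^2*B - (s+(s-1)*l)*A - l*(s-1)*(l-s))*(A+B) = 0 := by rw [I1, h]; ring
      exact (mul_eq_zero.1 h2).resolve_right (ne_of_gt hd2)
    · intro h
      have h2 : ((s-l)*(A+B) + (l-A)*(s+1))*((s-1)*(A+l)) = 0 := by
        rw [← mul_assoc, ← I1, h]; ring
      have hne : (s-1)*(A+l) ≠ 0 :=
        ne_of_gt (mul_pos (by linarith) (by linarith))
      exact (mul_eq_zero.1 h2).resolve_right hne
  have htAu1 : 0 < (s+(s-1)*l)*A + l*(s-1)*(l-s) := by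
    nlinarith [mul_pos (mul_pos hl (sub_pos.2 hs)) (sub_pos.2 hAs)]
  have htAu2 : 0 < (s+(s-1)*l)*A - l*(s-1)*(l-s) := by
    nlinarith [mul_pos (mul_pos hl (sub_pos.2 hs)) (sub_pos.2 hAl)]
  have hsB : 0 < s^2*B := by positivity
  have step3 : (s^2*B - (s+(s-1)*l)*A - l*(s-1)*(l-s) = 0)
      ↔ 4*(s-1)*l^2 - (3*s-1)*(s-3)*l - 4*s*(s-1) = 0 := by
    constructor
    · intro h
      have hsq : (s^2*B)^2 = ((s+(s-1)*l)*A + l*(s-1)*(l-s))^2 := by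
        have h' : s^2*B = (s+(s-1)*l)*A + l*(s-1)*(l-s) := by linarith
        rw [h']
      have e1 : 2*(s+(s-1)*l)*(l*(s-1)*(l-s))*A
          = s^4*(1+l^2) - (s+(s-1)*l)^2*(s^2+l^2) - (l*(s-1)*(l-s))^2 := by
        linear_combination - hsq + s^4 * hB2 - (s+(s-1)*l)^2 * hA2
      have e3 : s^4*l^3*(s-1)^2*(4*(s-1)*l^2 - (3*s-1)*(s-3)*l - 4*s*(s-1)) = 0 := by
        linear_combination
          (-(s^4*(1+l^2) - (s+(s-1)*l)^2*(s^2+l^2) - (l*(s-1)*(l-s))^2)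
            - 2*(s+(s-1)*l)*(l*(s-1)*(l-s))*A) * e1
          + 4*(s+(s-1)*l)^2*(l*(s-1)*(l-s))^2 * hA2
      have hne : s^4*l^3*(s-1)^2 ≠ 0 :=
        ne_of_gt (mul_pos (mul_pos (pow_pos hs0 4) (pow_pos hl 3))
          (pow_pos (by linarith) 2))
      exact (mul_eq_zero.1 e3).resolve_left hne
    · intro hq
      have e1 : (2*(s+(s-1)*l)*(l*(s-1)*(l-s))*A
            - (s^4*(1+l^2) - (s+(s-1)*l)^2*(s^2+l^2) - (l*(s-1)*(l-s))^2))
          * (2*(s+(s-1)*l)*(l*(s-1)*(l-s))*A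
            + (s^4*(1+l^2) - (s+(s-1)*l)^2*(s^2+l^2) - (l*(s-1)*(l-s))^2)) = 0 := by
        linear_combination 4*(s+(s-1)*l)^2*(l*(s-1)*(l-s))^2 * hA2
          - s^4*l^3*(s-1)^2 * hq
      rcases mul_eq_zero.1 e1 with h | h
      · -- genuine branch
        have hsq' : (s^2*B - ((s+(s-1)*l)*A + l*(s-1)*(l-s)))
            * (s^2*B + ((s+(s-1)*l)*A + l*(s-1)*(l-s))) = 0 := by
          linear_combination s^4 * hB2 - (s+(s-1)*l)^2 * hA2 - h
        have hg := (mul_eq_zero.1 hsq').resolve_right (ne_of_gt (by linarith))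
        linarith
      · -- spurious branch : contradiction
        exfalso
        have hsq' : (s^2*B - ((s+(s-1)*l)*A - l*(s-1)*(l-s)))
            * (s^2*B + ((s+(s-1)*l)*A - l*(s-1)*(l-s))) = 0 := by
          linear_combination s^4 * hB2 - (s+(s-1)*l)^2 * hA2 + h
        have h3 := (mul_eq_zero.1 hsq').resolve_right (ne_of_gt (by linarith))
        have hbl : s^2*(B-l) = (s+(s-1)*l)*(A-l) := by linear_combination h3
        have h5 : s^2*(A+l) = s^2*((s+(s-1)*l)*(B+l)) := by
          linear_combination ((B+l)*(A+l)) * hbl - s^2*(A+l) * hB2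
            + (s+(s-1)*l)*(B+l) * hA2
        have h6 : A + l = (s+(s-1)*l)*(B+l) :=
          mul_left_cancel₀ (by positivity) h5
        nlinarith [mul_pos (mul_pos (sub_pos.2 hs) hl) hB,
          mul_pos (sub_pos.2 hs) hl, mul_pos hs0 hl]
  rw [h1, div_eq_zero_iff]
  constructor
  · rintro (h | h)
    · exact step3.1 (step2.1 h)
    · exact absurd h (ne_of_gt (by positivity))
  · intro h
    exact Or.inl (step2.2 (step3.2 h))

/-- The boundary evolution function `E(λ, l)` for the Hele-Shaw tumor growth model. -/
noncomputable def E (G0 cB lam l : ℝ) : ℝ :=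
  (G0 * cB / Real.sqrt lam) *
    ((Real.sqrt lam - l) / (Real.sqrt lam + 1) +
      (l - Real.sqrt (lam + l ^ 2)) / (Real.sqrt (lam + l ^ 2) + Real.sqrt (1 + l ^ 2)))

theorem stmt_5 (G0 cB lam : ℝ) (hG0 : 0 < G0) (hcB : 0 < cB) (hlam : 1 < lam) :
    ∃ l0 : ℝ, 0 < l0 ∧ E G0 cB lam l0 = 0 ∧
      ∀ l : ℝ, 0 < l → l ≠ l0 → E G0 cB lam l ≠ 0 := by
  have hlam0 : (0:ℝ) < lam := by linarith
  set s := Real.sqrt lam with hsdef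
  have hs1 : 1 < s := by
    have := Real.sqrt_lt_sqrt (le_of_lt one_pos) hlam
    rwa [Real.sqrt_one] at this
  have hs0 : (0:ℝ) < s := by linarith
  have hs2 : s ^ 2 = lam := Real.sq_sqrt hlam0.le
  -- characterization of zeros
  have hchar : ∀ l : ℝ, 0 < l →
      (E G0 cB lam l = 0 ↔ 4*(s-1)*l^2 - (3*s-1)*(s-3)*l - 4*s*(s-1) = 0) := by
    intro l hl
    have hA0 : 0 < Real.sqrt (lam + l ^ 2) := Real.sqrt_pos.2 (by positivity)
    have hB0 : 0 < Real.sqrt (1 + l ^ 2) := Real.sqrt_pos.2 (by positivity)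
    have hA2 : (Real.sqrt (lam + l ^ 2)) ^ 2 = s ^ 2 + l ^ 2 := by
      rw [Real.sq_sqrt (by positivity : (0:ℝ) ≤ lam + l ^ 2), hs2]
    have hB2 : (Real.sqrt (1 + l ^ 2)) ^ 2 = 1 + l ^ 2 :=
      Real.sq_sqrt (by positivity)
    have hiff := key s l (Real.sqrt (lam + l ^ 2)) (Real.sqrt (1 + l ^ 2))
      hs1 hl hA0 hB0 hA2 hB2
    unfold E
    rw [← hsdef]
    constructor
    · intro h
      rcases mul_eq_zero.1 h with h | h
      · exact absurd h (ne_of_gt (by positivity))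
      · exact hiff.1 h
    · intro h
      exact mul_eq_zero_of_right _ (hiff.2 h)
  -- the explicit root
  set c : ℝ := (3*s-1)*(s-3) with hcdef
  set d : ℝ := Real.sqrt (9*s^4+4*s^3-10*s^2+4*s+9) with hddef
  have hΔpos : (0:ℝ) < 9*s^4+4*s^3-10*s^2+4*s+9 := by
    nlinarith [sq_nonneg c, mul_pos hs0 (pow_pos (show (0:ℝ) < s - 1 by linarith) 2)]
  have hd2 : d ^ 2 = 9*s^4+4*s^3-10*s^2+4*s+9 := Real.sq_sqrt hΔpos.le
  have hd0 : 0 ≤ d := Real.sqrt_nonneg _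
  have hΔc : 9*s^4+4*s^3-10*s^2+4*s+9 = c^2 + 64*s*(s-1)^2 := by rw [hcdef]; ring
  have hdc : c < d := by
    by_contra hcon
    push_neg at hcon
    nlinarith [mul_le_mul hcon hcon hd0 (hd0.trans hcon),
      mul_pos hs0 (pow_pos (show (0:ℝ) < s - 1 by linarith) 2)]
  have hdc2 : -c < d := by
    by_contra hcon
    push_neg at hcon
    nlinarith [mul_le_mul hcon hcon hd0 (hd0.trans hcon),
      mul_pos hs0 (pow_pos (show (0:ℝ) < s - 1 by linarith) 2)]
  set l0 : ℝ := (c + d) / (8*(s-1)) with hl0def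
  have h8 : (0:ℝ) < 8*(s-1) := by linarith
  have hl0pos : 0 < l0 := div_pos (by linarith) h8
  have hl0' : 8*(s-1)*l0 = c + d := by
    rw [hl0def]; field_simp [(show (0:ℝ) < s - 1 by linarith).ne']
  have hql0 : 4*(s-1)*l0^2 - (3*s-1)*(s-3)*l0 - 4*s*(s-1) = 0 := by
    have h64 : ((8*(s-1))^2 : ℝ) ≠ 0 := ne_of_gt (by positivity)
    apply mul_left_cancel₀ h64
    rw [mul_zero]
    linear_combination (4*(s-1)*(8*(s-1)*l0 + d - c)) * hl0' + (4*(s-1)) * hd2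
  refine ⟨l0, hl0pos, (hchar l0 hl0pos).2 hql0, ?_⟩
  intro l hl hne hEl
  have hq := (hchar l hl).1 hEl
  have hfac : (l - l0) * (4*(s-1)*(l + l0) - (3*s-1)*(s-3)) = 0 := by
    linear_combination hq - hql0
  rcases mul_eq_zero.1 hfac with h | h
  · exact hne (by linarith)
  · have : 0 < 4*(s-1)*(l + l0) - (3*s-1)*(s-3) := by
      nlinarith [mul_pos (show (0:ℝ) < s - 1 by linarith) hl]
    linarith
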